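/- Fix μ ≥ 0 and λ > 0, and for entire functions f, g define the μ-Wronskian W_μ[f,g](z) = (1/(2μi))·(f(z+iμ)g(z−iμ) − f(z−iμ)g(z+iμ)). Let f = g + i·h with g, h real entire. Then |f(z)| > |f*(z)| for all z with Im z > μ if and only if W_λ[h,g](x) < 0 for all real λ > μ and all x ∈ ℝ. -/

import Mathlib

open Complex
open scoped ComplexOrder

open Asymptotics Filter

/-- If `g` is entire, then `z ↦ conj (g (conj z))` is entire. -/
lemma conj_conj_differentiable {g : ℂ → ℂ} (hg : Differentiable ℂ g) :
    Differentiable ℂ (fun z => (starRingEnd ℂ) (g ((starRingEnd ℂ) z))) := by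
  intro z
  set d := deriv g ((starRingEnd ℂ) z)
  have hd : HasDerivAt g d ((starRingEnd ℂ) z) := (hg _).hasDerivAt
  rw [hasDerivAt_iff_isLittleO] at hd
  have hconj : Filter.Tendsto (starRingEnd ℂ) (nhds z) (nhds ((starRingEnd ℂ) z)) :=
    (Complex.continuous_conj.tendsto z)
  have h2 := hd.comp_tendsto hconj
  have h3 : (fun x' => ‖g ((starRingEnd ℂ) x') - g ((starRingEnd ℂ) z) -
      ((starRingEnd ℂ) x' - (starRingEnd ℂ) z) • d‖) =o[nhds z]
      fun x' => ‖(starRingEnd ℂ) x' - (starRingEnd ℂ) z‖ := h2.norm_norm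
  have key : HasDerivAt (fun z => (starRingEnd ℂ) (g ((starRingEnd ℂ) z)))
      ((starRingEnd ℂ) d) z := by
    rw [hasDerivAt_iff_isLittleO, ← isLittleO_norm_norm]
    refine h3.congr (fun x => ?_) (fun x => ?_)
    · have he : (starRingEnd ℂ) (g ((starRingEnd ℂ) x)) - (starRingEnd ℂ) (g ((starRingEnd ℂ) z)) -
          (x - z) • (starRingEnd ℂ) d =
          (starRingEnd ℂ) (g ((starRingEnd ℂ) x) - g ((starRingEnd ℂ) z) -
            ((starRingEnd ℂ) x - (starRingEnd ℂ) z) • d) := by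
        simp [smul_eq_mul, map_sub, map_mul]
      rw [he, RCLike.norm_conj]
    · rw [← map_sub, RCLike.norm_conj]
  exact key.differentiableAt

/-- Schwarz reflection: an entire function real on the reals satisfies
`g (conj z) = conj (g z)`. -/
lemma schwarz_reflect {g : ℂ → ℂ} (hg : Differentiable ℂ g)
    (hgr : ∀ x : ℝ, (g x).im = 0) (z : ℂ) :
    g ((starRingEnd ℂ) z) = (starRingEnd ℂ) (g z) := by
  set F : ℂ → ℂ := fun z => (starRingEnd ℂ) (g ((starRingEnd ℂ) z)) with hF
  have hFd : Differentiable ℂ F := conj_conj_differentiable hg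
  have hFa : AnalyticOnNhd ℂ F Set.univ :=
    hFd.differentiableOn.analyticOnNhd isOpen_univ
  have hga : AnalyticOnNhd ℂ g Set.univ :=
    hg.differentiableOn.analyticOnNhd isOpen_univ
  have hagree : ∀ x : ℝ, F x = g x := by
    intro x
    have h1 : (starRingEnd ℂ) (x : ℂ) = (x : ℂ) := Complex.conj_ofReal x
    have h2 : (starRingEnd ℂ) (g x) = g x := by
      rw [Complex.conj_eq_iff_im]; exact hgr x
    rw [hF]; simp only [h1, h2]
  have htend : Filter.Tendsto (fun n : ℕ => ((((n : ℝ) + 1)⁻¹ : ℝ) : ℂ)) Filter.atTop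
      (nhdsWithin 0 {(0 : ℂ)}ᶜ) := by
    rw [tendsto_nhdsWithin_iff]
    constructor
    · have h0 : Filter.Tendsto (fun n : ℕ => ((n : ℝ) + 1)⁻¹) Filter.atTop (nhds 0) :=
        tendsto_one_div_add_atTop_nhds_zero_nat.congr (fun n => by rw [one_div])
      have := (Complex.continuous_ofReal.tendsto 0).comp h0
      simpa [Function.comp_def] using this
    · refine Filter.Eventually.of_forall fun n => ?_
      simp only [Set.mem_compl_iff, Set.mem_singleton_iff, Complex.ofReal_eq_zero]
      positivity
  have hfreq : ∃ᶠ w in nhdsWithin 0 {(0 : ℂ)}ᶜ, F w = g w :=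
    htend.frequently (Filter.Frequently.of_forall fun n => hagree _)
  have := hFa.eq_of_frequently_eq hga hfreq
  have hz := congrFun this ((starRingEnd ℂ) z)
  have : (starRingEnd ℂ) (g z) = g ((starRingEnd ℂ) z) := by
    rw [← hz, hF]
    simp
  exact this.symm

theorem stmt_6 (g h : ℂ → ℂ) (hg : Differentiable ℂ g) (hh : Differentiable ℂ h)
    (hgr : ∀ x : ℝ, (g x).im = 0) (hhr : ∀ x : ℝ, (h x).im = 0)
    (μ : ℝ) (hμ : 0 ≤ μ) :
    (∀ z : ℂ, μ < z.im →
        ‖(starRingEnd ℂ) ((g ((starRingEnd ℂ) z) + I * h ((starRingEnd ℂ) z)))‖ <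
          ‖g z + I * h z‖) ↔
    (∀ l : ℝ, μ < l → ∀ x : ℝ,
        ((h (x + I * l) * g (x - I * l) - h (x - I * l) * g (x + I * l)) /
            (2 * l * I)) < 0) := by
  have hgs := schwarz_reflect hg hgr
  have hhs := schwarz_reflect hh hhr
  -- key: both sides equivalent to Im (g z * conj (h z)) > 0 for Im z > μ
  have keyL : ∀ z : ℂ, (‖(starRingEnd ℂ)
        ((g ((starRingEnd ℂ) z) + I * h ((starRingEnd ℂ) z)))‖ <
        ‖g z + I * h z‖) ↔
      0 < (g z * (starRingEnd ℂ) (h z)).im := by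
    intro z
    rw [map_add, map_mul, hgs, hhs, Complex.conj_I, Complex.conj_conj, Complex.conj_conj]
    set A := g z; set B := h z
    rw [show ‖A + -I * B‖ =
        Real.sqrt (Complex.normSq (A + -I * B)) from rfl,
      show ‖A + I * B‖ = Real.sqrt (Complex.normSq (A + I * B)) from rfl,
      Real.sqrt_lt_sqrt_iff (Complex.normSq_nonneg _)]
    simp only [Complex.normSq_apply, Complex.add_re, Complex.add_im, Complex.mul_re,
      Complex.mul_im, Complex.conj_re, Complex.conj_im, Complex.I_re, Complex.I_im,
      Complex.neg_re, Complex.neg_im]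
    constructor <;> intro hlt <;> nlinarith
  constructor
  · intro hL l hl x
    have hz : ((x : ℂ) + I * l).im = l := by simp
    have h1 := (keyL _).1 (hL ((x : ℂ) + I * l) (by rw [hz]; exact hl))
    have hconjz : (starRingEnd ℂ) ((x : ℂ) + I * l) = (x : ℂ) - I * l := by
      simp [map_add, map_mul, Complex.conj_I, Complex.conj_ofReal, sub_eq_add_neg]; try ring
    have hgc : g ((x : ℂ) - I * l) = (starRingEnd ℂ) (g ((x : ℂ) + I * l)) := by
      rw [← hconjz, hgs]
    have hhc : h ((x : ℂ) - I * l) = (starRingEnd ℂ) (h ((x : ℂ) + I * l)) := by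
      rw [← hconjz, hhs]
    set A := g ((x : ℂ) + I * l); set B := h ((x : ℂ) + I * l)
    rw [hgc, hhc]
    have hl0 : (0 : ℝ) < l := lt_of_le_of_lt hμ hl
    have hval : (B * (starRingEnd ℂ) A - (starRingEnd ℂ) B * A) / (2 * (l : ℂ) * I) =
        ((-((A * (starRingEnd ℂ) B).im / l) : ℝ) : ℂ) := by
      have hA : (starRingEnd ℂ) A = ⟨A.re, -A.im⟩ := rfl
      have hB : (starRingEnd ℂ) B = ⟨B.re, -B.im⟩ := rfl
      rw [div_eq_iff (by
        simp only [ne_eq, mul_eq_zero, Complex.I_ne_zero, or_false]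
        push_neg
        constructor
        · exact two_ne_zero
        · exact_mod_cast hl0.ne')]
      apply Complex.ext <;>
        simp [hA, hB, Complex.mul_re, Complex.mul_im, Complex.mul_im] <;>
        field_simp <;> try ring
    rw [hval, ← Complex.ofReal_zero, Complex.real_lt_real]
    have h2 := div_pos h1 hl0
    linarith
  · intro hR z hz
    rw [keyL]
    set l := z.im
    set x := z.re
    have hl : μ < l := hz
    have hl0 : (0 : ℝ) < l := lt_of_le_of_lt hμ hl
    have hzeq : z = (x : ℂ) + I * l := by
      apply Complex.ext <;> simp [x, l]
    have hconjz : (starRingEnd ℂ) z = (x : ℂ) - I * l := by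
      rw [hzeq]
      simp [map_add, map_mul, Complex.conj_I, Complex.conj_ofReal, sub_eq_add_neg]; try ring
    have h1 := hR l hl x
    rw [← hzeq, ← hconjz, hgs, hhs] at h1
    set A := g z; set B := h z
    have hval : (B * (starRingEnd ℂ) A - (starRingEnd ℂ) B * A) / (2 * (l : ℂ) * I) =
        ((-((A * (starRingEnd ℂ) B).im / l) : ℝ) : ℂ) := by
      have hA : (starRingEnd ℂ) A = ⟨A.re, -A.im⟩ := rfl
      have hB : (starRingEnd ℂ) B = ⟨B.re, -B.im⟩ := rfl
      rw [div_eq_iff (by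
        simp only [ne_eq, mul_eq_zero, Complex.I_ne_zero, or_false]
        push_neg
        constructor
        · exact two_ne_zero
        · exact_mod_cast hl0.ne')]
      apply Complex.ext <;>
        simp [hA, hB, Complex.mul_re, Complex.mul_im] <;>
        field_simp <;> try ring
    rw [hval, ← Complex.ofReal_zero, Complex.real_lt_real] at h1
    have : 0 < (A * (starRingEnd ℂ) B).im / l := by linarith
    have := (div_pos_iff.mp this)
    rcases this with ⟨h2, _⟩ | ⟨_, h3⟩
    · exact h2
    · linarith
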